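/- arXiv:1609.02247 — 4 statements merged into one kernel-verified Lean document; each statement's English description precedes it below -/
import Mathlib

section
/- For any complex polynomial P of degree N, the supremum of |P'(z)| over the closed unit disk is at most N times the supremum of |P(z)| over the closed unit disk. -/
open Metric Polynomial Complex

private lemma bern_aux (z : ℂ) (hz : 1 < ‖z‖) :
    ∀ (M : Multiset ℂ), (∀ r ∈ M, ‖r‖ ≤ 1) → ∀ (a : ℂ), a ≠ 0 →
      (eval z (C a * (M.map fun r => X - C r).prod) ≠ 0) ∧
      0 ≤ (z * eval z (derivative (C a * (M.map fun r => X - C r).prod)) *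
          (starRingEnd ℂ) (eval z (C a * (M.map fun r => X - C r).prod))).re ∧
      (M ≠ 0 → 0 < (z * eval z (derivative (C a * (M.map fun r => X - C r).prod)) *
          (starRingEnd ℂ) (eval z (C a * (M.map fun r => X - C r).prod))).re) := by
  intro M
  induction M using Multiset.induction_on with
  | empty =>
    intro _ a ha
    simp [ha]
  | cons r s ih =>
    intro hmem a ha
    have hr : ‖r‖ ≤ 1 := hmem r (Multiset.mem_cons_self r s)
    obtain ⟨hq0, hq1, _⟩ := ih (fun x hx => hmem x (Multiset.mem_cons_of_mem hx)) a ha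
    set Q : Polynomial ℂ := C a * (s.map fun r => X - C r).prod with hQ
    have hfac : C a * ((r ::ₘ s).map fun r => X - C r).prod = (X - C r) * Q := by
      rw [Multiset.map_cons, Multiset.prod_cons]; ring
    rw [hfac]
    set q := eval z Q
    set q' := eval z (derivative Q)
    set u := z - r with hu
    have hune : u ≠ 0 := by
      refine sub_ne_zero_of_ne fun h => ?_
      rw [h] at hz; linarith
    have heval : eval z ((X - C r) * Q) = u * q := by simp [hu, q]
    have hder : eval z (derivative ((X - C r) * Q)) = q + u * q' := by
      simp [derivative_mul, hu, q, q']; try ring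
    rw [heval, hder]
    have hexpand : z * (q + u * q') * (starRingEnd ℂ) (u * q)
        = ((normSq q : ℂ)) * (z * (starRingEnd ℂ) u)
          + ((normSq u : ℂ)) * (z * q' * (starRingEnd ℂ) q) := by
      rw [map_mul, ← Complex.mul_conj, ← Complex.mul_conj]; ring
    have hpos : 0 < (z * (starRingEnd ℂ) u).re := by
      have h1 : z * (starRingEnd ℂ) u = (normSq z : ℂ) - z * (starRingEnd ℂ) r := by
        rw [hu, map_sub, ← Complex.mul_conj]; ring
      have h2 : (z * (starRingEnd ℂ) r).re ≤ ‖z‖ * ‖r‖ := by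
        calc (z * (starRingEnd ℂ) r).re ≤ ‖z * (starRingEnd ℂ) r‖ :=
              Complex.re_le_norm _
          _ = ‖z‖ * ‖r‖ := by simp [map_mul]
      have h3 : (normSq z : ℝ) = ‖z‖ ^ 2 := by
        rw [Complex.normSq_eq_norm_sq]
      rw [h1]
      simp only [Complex.sub_re, Complex.ofReal_re]
      nlinarith [norm_nonneg z]
    have hqpos : 0 < normSq q := Complex.normSq_pos.mpr hq0
    have hupos : 0 < normSq u := Complex.normSq_pos.mpr hune
    have hre : (z * (q + u * q') * (starRingEnd ℂ) (u * q)).re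
        = normSq q * (z * (starRingEnd ℂ) u).re + normSq u * (z * q' * (starRingEnd ℂ) q).re := by
      rw [hexpand]
      simp [Complex.add_re, Complex.re_ofReal_mul]
    refine ⟨mul_ne_zero hune hq0, ?_, fun _ => ?_⟩ <;> rw [hre] <;> nlinarith

private lemma bern_growth (N : ℕ) (P : Polynomial ℂ) (hP : P.natDegree ≤ N) (M : ℝ)
    (hM : ∀ w ∈ closedBall (0:ℂ) 1, ‖eval w P‖ ≤ M) :
    ∀ z : ℂ, 1 ≤ ‖z‖ → ‖eval z P‖ ≤ M * ‖z‖ ^ N := by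
  set Q : Polynomial ℂ := ∑ i ∈ Finset.range (N+1), C (P.coeff (N - i)) * X ^ i with hQdef
  have key : ∀ z : ℂ, z ≠ 0 → eval z Q = z ^ N * eval z⁻¹ P := by
    intro z hz
    rw [hQdef, eval_finset_sum,
      Polynomial.eval_eq_sum_range' (lt_of_le_of_lt hP (Nat.lt_succ_self N)), Finset.mul_sum,
      ← Finset.sum_range_reflect]
    refine Finset.sum_congr rfl fun i hi => ?_
    rw [Finset.mem_range, Nat.lt_succ_iff] at hi
    simp only [eval_mul, eval_C, eval_pow, eval_X, Nat.succ_sub_one]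
    field_simp
    rw [show N - (N - i) = i from by omega, ← pow_sub_mul_pow z hi, one_div, inv_pow]
    field_simp
  have hQb : ∀ w ∈ closedBall (0:ℂ) 1, ‖eval w Q‖ ≤ M := by
    have hb : ∀ w ∈ frontier (ball (0:ℂ) 1), ‖eval w Q‖ ≤ M := by
      intro w hw
      rw [frontier_ball (0:ℂ) one_ne_zero, mem_sphere_zero_iff_norm] at hw
      have hw0 : w ≠ 0 := by intro h; rw [h] at hw; simp at hw
      rw [key w hw0]
      have h1 : ‖w ^ N * eval w⁻¹ P‖ = ‖eval w⁻¹ P‖ := by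
        rw [norm_mul, norm_pow, hw]; simp
      rw [h1]
      exact hM _ (by simp [mem_closedBall, norm_inv, hw])
    intro w hw
    exact Complex.norm_le_of_forall_mem_frontier_norm_le isBounded_ball
      ((Q.differentiable).diffContOnCl) hb (by rwa [closure_ball (0:ℂ) one_ne_zero])
  intro z hz
  have hz0 : z ≠ 0 := by intro h; rw [h] at hz; simp at hz; linarith
  have hzinv : z⁻¹ ∈ closedBall (0:ℂ) 1 := by
    simp only [mem_closedBall, dist_zero_right, norm_inv]
    rw [inv_le_one₀ (by linarith : (0:ℝ) < ‖z‖)]; exact hz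
  have h2 := hQb z⁻¹ hzinv
  rw [key z⁻¹ (inv_ne_zero hz0), inv_inv, norm_mul, norm_pow, norm_inv] at h2
  have hzpos : (0:ℝ) < ‖z‖ ^ N := by positivity
  calc ‖eval z P‖ = (‖z‖⁻¹ ^ N * ‖eval z P‖) * ‖z‖ ^ N := by
        rw [inv_pow, inv_mul_eq_div, div_mul_cancel₀ _ (ne_of_gt hzpos)]
    _ ≤ M * ‖z‖ ^ N := by
        exact mul_le_mul_of_nonneg_right h2 (le_of_lt hzpos)

private lemma unit_ratio (c d : ℂ) (hc : c ≠ 0) (hd : d ≠ 0) :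
    ‖c * (‖d‖ : ℂ) / (d * (‖c‖ : ℂ))‖ = 1 := by
  have hcn : (0:ℝ) < ‖c‖ := norm_pos_iff.mpr hc
  have hdn : (0:ℝ) < ‖d‖ := norm_pos_iff.mpr hd
  rw [norm_div, norm_mul, norm_mul, Complex.norm_real, Complex.norm_real,
    Real.norm_eq_abs, Real.norm_eq_abs, abs_of_pos hdn, abs_of_pos hcn,
    div_eq_one_iff_eq (by positivity)]
  ring

private lemma norm_eq_one_of_pow (w : ℂ) (N : ℕ) (hN : N ≠ 0) (h : ‖w‖ ^ N = 1) :
    ‖w‖ = 1 := by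
  rcases lt_trichotomy ‖w‖ 1 with h1 | h1 | h1
  · have := pow_lt_one₀ (norm_nonneg w) h1 hN
    rw [h] at this; linarith
  · exact h1
  · have := one_lt_pow₀ h1 hN
    rw [h] at this; linarith

private lemma ratio_eval (c d : ℂ) (hc : c ≠ 0) (hd : d ≠ 0) :
    d * (c * (‖d‖ : ℂ) / (d * (‖c‖ : ℂ))) + c = c * (((‖d‖ / ‖c‖ + 1 : ℝ)) : ℂ) := by
  have hcn : ((‖c‖ : ℝ) : ℂ) ≠ 0 := by
    exact_mod_cast ne_of_gt (norm_pos_iff.mpr hc)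
  push_cast
  field_simp

private lemma bern_outside (N : ℕ) (hN : 1 ≤ N) (P : Polynomial ℂ) (hP : P.natDegree ≤ N)
    (M : ℝ) (hMpos : 0 < M) (hM : ∀ w ∈ closedBall (0:ℂ) 1, ‖eval w P‖ ≤ M)
    (z : ℂ) (hz : 1 < ‖z‖) :
    ‖eval z (derivative P)‖ ≤ M * N * ‖z‖ ^ (N - 1) := by
  by_contra hcon
  push_neg at hcon
  have hz0 : z ≠ 0 := by
    intro h; rw [h] at hz; simp at hz; linarith
  have hNpos : (0:ℝ) < N := by exact_mod_cast hN
  have hdenpos : (0:ℝ) < M * N * ‖z‖ ^ (N - 1) := by positivity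
  have hc0 : (M:ℂ) * (N:ℂ) * z ^ (N - 1) ≠ 0 := by
    apply mul_ne_zero (mul_ne_zero _ _) (pow_ne_zero _ hz0)
    · exact_mod_cast ne_of_gt hMpos
    · exact_mod_cast ne_of_gt hNpos
  set lam : ℂ := eval z (derivative P) / ((M:ℂ) * (N:ℂ) * z ^ (N - 1)) with hlamdef
  have hnden : ‖(M:ℂ) * (N:ℂ) * z ^ (N - 1)‖ = M * N * ‖z‖ ^ (N - 1) := by
    rw [norm_mul, norm_mul, norm_pow]
    simp [abs_of_pos hMpos]
  have hlam : 1 < ‖lam‖ := by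
    rw [hlamdef, norm_div, hnden, lt_div_iff₀ hdenpos, one_mul]
    exact hcon
  have hlam0 : lam ≠ 0 := by
    intro h; rw [h] at hlam; simp at hlam; linarith
  have hlamM : M < ‖lam * M‖ := by
    rw [norm_mul]
    simp only [Complex.norm_real, Real.norm_eq_abs, abs_of_pos hMpos]
    nlinarith
  set R : Polynomial ℂ := P - C (lam * M) * X ^ N with hRdef
  -- derivative of R vanishes at z
  have hRz : eval z (derivative R) = 0 := by
    rw [hRdef]
    rw [derivative_sub, derivative_C_mul, derivative_X_pow]
    simp only [eval_sub, eval_mul, eval_C, eval_natCast, eval_pow, eval_X]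
    rw [hlamdef]
    have hM0' : (M:ℂ) ≠ 0 := by exact_mod_cast ne_of_gt hMpos
    have hN0' : (N:ℂ) ≠ 0 := by exact_mod_cast ne_of_gt hNpos
    field_simp
    ring
  -- evaluations of R outside the closed disk are nonzero
  have hRout : ∀ w : ℂ, 1 < ‖w‖ → eval w R ≠ 0 := by
    intro w hw h0
    rw [hRdef] at h0
    simp only [eval_sub, eval_mul, eval_C, eval_pow, eval_X, sub_eq_zero] at h0
    have h1 : ‖eval w P‖ ≤ M * ‖w‖ ^ N := bern_growth N P hP M hM w (le_of_lt hw)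
    have h2 : ‖lam * ↑M * w ^ N‖ = ‖lam‖ * M * ‖w‖ ^ N := by
      rw [norm_mul, norm_mul, norm_pow]
      simp [abs_of_pos hMpos]
    rw [h0, h2] at h1
    have hwN : (0:ℝ) < ‖w‖ ^ N := by positivity
    nlinarith [mul_pos hMpos hwN]
  -- R is not the zero polynomial
  have hR0 : R ≠ 0 := by
    intro h
    have hPeq : P = C (lam * M) * X ^ N := by
      exact sub_eq_zero.mp (by rw [← hRdef, h])
    have h1 := hM 1 (by simp)
    rw [hPeq] at h1
    simp only [eval_mul, eval_C, eval_pow, eval_X, one_pow, mul_one] at h1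
    linarith
  by_cases hdeg : R.natDegree = 0
  · -- R is a nonzero constant c, so P = lam*M*X^N + c
    have hc := Polynomial.eq_C_of_natDegree_eq_zero hdeg
    set c := R.coeff 0 with hcdef
    have hcne : c ≠ 0 := fun h => hR0 (by rw [hc, h, map_zero])
    have hPeq : P = C (lam * ↑M) * X ^ N + C c := by
      have h1 : P - C (lam * ↑M) * X ^ N = C c := by rw [← hRdef]; exact hc
      rw [add_comm]
      exact eq_add_of_sub_eq h1
    set d : ℂ := lam * (M:ℂ) with hddef
    have hd0 : d ≠ 0 := mul_ne_zero hlam0 (by exact_mod_cast ne_of_gt hMpos)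
    have hdn : (0:ℝ) < ‖d‖ := norm_pos_iff.mpr hd0
    have hcn : (0:ℝ) < ‖c‖ := norm_pos_iff.mpr hcne
    set t : ℂ := c * (‖d‖ : ℂ) / (d * (‖c‖ : ℂ)) with htdef
    obtain ⟨w, hw⟩ := IsAlgClosed.exists_pow_nat_eq t (lt_of_lt_of_le one_pos hN)
    have ht : ‖t‖ = 1 := unit_ratio c d hcne hd0
    have hwn : ‖w‖ = 1 := by
      refine norm_eq_one_of_pow w N (by omega) ?_
      rw [← norm_pow, hw, ht]
    have hPw : eval w P = c * (((‖d‖ / ‖c‖ + 1 : ℝ)) : ℂ) := by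
      rw [hPeq]
      simp only [eval_add, eval_mul, eval_C, eval_pow, eval_X, hw, htdef]
      exact ratio_eval c d hcne hd0
    have h2 := hM w (by simp [mem_closedBall, hwn])
    rw [hPw, norm_mul, Complex.norm_real, Real.norm_eq_abs,
      abs_of_pos (by positivity : (0:ℝ) < ‖d‖ / ‖c‖ + 1)] at h2
    have h3' : ‖c‖ * (‖d‖ / ‖c‖) = ‖d‖ := by
      rw [mul_comm]; exact div_mul_cancel₀ ‖d‖ (ne_of_gt hcn)
    have h3 : ‖c‖ * (‖d‖ / ‖c‖ + 1) = ‖d‖ + ‖c‖ := by rw [mul_add, mul_one, h3']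
    rw [h3] at h2
    have h4 : ‖d‖ = ‖lam‖ * M := by
      rw [hddef, norm_mul, Complex.norm_real, Real.norm_eq_abs, abs_of_pos hMpos]
    nlinarith
  · have hdeg1 : 1 ≤ R.natDegree := Nat.one_le_iff_ne_zero.mpr hdeg
    have hsplit : Splits R := IsAlgClosed.splits R
    have hcard : R.roots.card = R.natDegree := splits_iff_card_roots.mp hsplit
    have hroots0 : R.roots ≠ 0 := by
      intro h; rw [h] at hcard; simp at hcard; omega
    have hrootsball : ∀ r ∈ R.roots, ‖r‖ ≤ 1 := by
      intro r hr
      by_contra hgt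
      push_neg at hgt
      exact hRout r hgt (Polynomial.isRoot_of_mem_roots hr)
    have hfac : R = C R.leadingCoeff * (R.roots.map fun a => X - C a).prod :=
      hsplit.eq_prod_roots
    have hlc : R.leadingCoeff ≠ 0 := leadingCoeff_ne_zero.mpr hR0
    obtain ⟨-, -, hstrict⟩ := bern_aux z hz R.roots hrootsball R.leadingCoeff hlc
    rw [← hfac] at hstrict
    have hpos := hstrict hroots0
    rw [hRz] at hpos
    simp at hpos

private lemma bern_ball (N : ℕ) (hN : 1 ≤ N) (P : Polynomial ℂ) (hP : P.natDegree ≤ N)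
    (M : ℝ) (hMpos : 0 < M) (hM : ∀ w ∈ closedBall (0:ℂ) 1, ‖eval w P‖ ≤ M) :
    ∀ w ∈ closedBall (0:ℂ) 1, ‖eval w (derivative P)‖ ≤ M * N := by
  have hb : ∀ z ∈ frontier (ball (0:ℂ) 1), ‖eval z (derivative P)‖ ≤ M * N := by
    intro z hzf
    rw [frontier_ball (0:ℂ) one_ne_zero, mem_sphere_zero_iff_norm] at hzf
    have hcont : Continuous fun t : ℝ => ‖eval ((t:ℂ) * z) (derivative P)‖ := by
      exact ((P.derivative.continuous_aeval.comp
        ((Complex.continuous_ofReal).mul continuous_const))).norm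
    have hf : Filter.Tendsto (fun t : ℝ => ‖eval ((t:ℂ) * z) (derivative P)‖)
        (nhdsWithin (1:ℝ) (Set.Ioi 1)) (nhds ‖eval z (derivative P)‖) := by
      have h1 := hcont.tendsto 1
      simp only [Complex.ofReal_one, one_mul] at h1
      exact h1.mono_left nhdsWithin_le_nhds
    have hg : Filter.Tendsto (fun t : ℝ => M * N * t ^ (N - 1))
        (nhdsWithin (1:ℝ) (Set.Ioi 1)) (nhds (M * N)) := by
      have h1 : Continuous fun t : ℝ => M * N * t ^ (N - 1) := by continuity
      have h2 := h1.tendsto 1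
      simp only [one_pow, mul_one] at h2
      exact h2.mono_left nhdsWithin_le_nhds
    refine le_of_tendsto_of_tendsto hf hg ?_
    filter_upwards [self_mem_nhdsWithin] with t ht
    rw [Set.mem_Ioi] at ht
    have htpos : (0:ℝ) < t := by linarith
    have h1 : 1 < ‖(t:ℂ) * z‖ := by
      rw [norm_mul, hzf, mul_one, Complex.norm_real, Real.norm_eq_abs, abs_of_pos htpos]
      exact ht
    have h2 := bern_outside N hN P hP M hMpos hM _ h1
    rwa [norm_mul, hzf, mul_one, Complex.norm_real, Real.norm_eq_abs,
      abs_of_pos htpos] at h2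
  intro w hw
  exact Complex.norm_le_of_forall_mem_frontier_norm_le isBounded_ball
    ((P.derivative.differentiable).diffContOnCl) hb
    (by rwa [closure_ball (0:ℂ) one_ne_zero])

/-- Bernstein's polynomial inequality: for a complex polynomial of degree at most `N`,
the sup of `|P'|` over the closed unit disk is at most `N` times the sup of `|P|`. -/
theorem bernstein_polynomial_inequality (N : ℕ) (P : Polynomial ℂ)
    (hP : P.natDegree ≤ N) :
    (⨆ z ∈ Metric.closedBall (0 : ℂ) 1, ‖P.derivative.eval z‖) ≤
      N * ⨆ z ∈ Metric.closedBall (0 : ℂ) 1, ‖P.eval z‖ := by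
  set M : ℝ := ⨆ z ∈ Metric.closedBall (0 : ℂ) 1, ‖P.eval z‖ with hMdef
  -- boundedness of the inner family
  obtain ⟨C, hC⟩ := (isCompact_closedBall (0:ℂ) 1).exists_bound_of_continuousOn
    (Continuous.continuousOn (P.continuous_aeval.norm))
  have hbdd : BddAbove (Set.range fun z : ℂ =>
      ⨆ _ : z ∈ Metric.closedBall (0 : ℂ) 1, ‖P.eval z‖) := by
    refine ⟨max C 0, ?_⟩
    rintro x ⟨z, rfl⟩
    show (⨆ _ : z ∈ Metric.closedBall (0 : ℂ) 1, ‖P.eval z‖) ≤ max C 0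
    by_cases hz : z ∈ Metric.closedBall (0:ℂ) 1
    · rw [ciSup_pos hz]
      have := hC z hz
      rw [Real.norm_eq_abs] at this
      exact le_trans (le_abs_self _) (le_trans this (le_max_left _ _))
    · simp only [hz]
      rw [Real.iSup_of_isEmpty]
      exact le_max_right _ _
  have hMle : ∀ z ∈ Metric.closedBall (0:ℂ) 1, ‖P.eval z‖ ≤ M := by
    intro z hz
    have h1 := le_ciSup hbdd z
    rwa [ciSup_pos hz] at h1
  have hM0 : 0 ≤ M := le_trans (norm_nonneg _) (hMle 0 (by simp))
  -- a helper to bound the LHS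
  have main : ∀ B : ℝ, 0 ≤ B → (∀ w ∈ Metric.closedBall (0:ℂ) 1, ‖P.derivative.eval w‖ ≤ B) →
      (⨆ z ∈ Metric.closedBall (0 : ℂ) 1, ‖P.derivative.eval z‖) ≤ B := by
    intro B hB0 hB
    refine Real.iSup_le (fun z => ?_) hB0
    by_cases hz : z ∈ Metric.closedBall (0:ℂ) 1
    · rw [ciSup_pos hz]; exact hB z hz
    · simp only [hz]; rw [Real.iSup_of_isEmpty]; exact hB0
  rcases Nat.eq_zero_or_pos N with hN | hN
  · subst hN
    have hPd : P.derivative = 0 := by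
      rw [Polynomial.eq_C_of_natDegree_eq_zero (Nat.le_zero.mp hP)]
      exact derivative_C
    have := main 0 le_rfl (fun w _ => by rw [hPd]; simp)
    simpa using this
  · rcases eq_or_lt_of_le hM0 with hMz | hMpos
    · -- M = 0 : P vanishes on the ball, hence P = 0
      have hP0 : P = 0 := by
        apply Polynomial.eq_zero_of_infinite_isRoot
        apply Set.Infinite.mono (s := Metric.closedBall (0:ℂ) 1)
        · intro z hz
          have := hMle z hz
          rw [← hMz] at this
          have h0 : ‖P.eval z‖ = 0 := le_antisymm this (norm_nonneg _)
          simpa [Polynomial.IsRoot] using norm_eq_zero.mp h0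
        · have h1 : (Set.Icc (0:ℝ) 1).Infinite := Set.Icc_infinite zero_lt_one
          have h2 : ((fun t : ℝ => (t:ℂ)) '' Set.Icc 0 1).Infinite :=
            h1.image (fun a _ b _ h => Complex.ofReal_injective h)
          refine h2.mono ?_
          rintro _ ⟨t, ht, rfl⟩
          rw [mem_closedBall, dist_zero_right, Complex.norm_real, Real.norm_eq_abs,
            _root_.abs_of_nonneg ht.1]
          exact ht.2
      have := main 0 le_rfl (fun w _ => by rw [hP0]; simp)
      have h0 : (0:ℝ) ≤ N * M := by positivity
      linarith
    · have hb := bern_ball N hN P hP M hMpos hMle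
      have := main (M * N) (by positivity) hb
      rw [mul_comm] at this
      exact this
end

section
/- Suppose the pair (μ, z) is the unique minimizer of ‖μ̃‖_TV + λ‖z̃‖₁ subject to F_n μ̃ + z̃ = y, where y = F_n μ + z. Let μ' be the restriction of μ to a subset T' of its support and z' the restriction of z to a subset Ω' of its support, and set y' = F_n μ' + z'. Then (μ', z') is the unique minimizer of the same problem with data y' and the same λ. -/
open Real Complex

/-- The map sending a finitely-atomic measure `μ = ∑ x_j δ_{f_j}` (represented as a
finitely supported function `ℝ →₀ ℂ`) to its first `n` Fourier coefficients. -/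
noncomputable def Fmap (n : ℕ) (μ : ℝ →₀ ℂ) : Fin n → ℂ := fun l =>
  ∑ f ∈ μ.support, μ f * Complex.exp (Complex.I * (2 * π * ((l : ℕ) + 1) * f))

/-- The total-variation norm of a finitely-atomic measure. -/
noncomputable def tvNorm (μ : ℝ →₀ ℂ) : ℝ := ∑ f ∈ μ.support, ‖μ f‖

/-- `(μ, z)` is the unique minimizer of `‖μ̃‖_TV + λ‖z̃‖₁` subject to
`F_n μ̃ + z̃ = y`, over atomic measures supported in `[0,1]`. -/
def IsUniqueMin (n : ℕ) (lam : ℝ) (y : Fin n → ℂ) (μ : ℝ →₀ ℂ) (z : Fin n → ℂ) : Prop :=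
  (∀ f ∈ μ.support, f ∈ Set.Icc (0 : ℝ) 1) ∧
  (∀ l : Fin n, y l = Fmap n μ l + z l) ∧
  ∀ (μ' : ℝ →₀ ℂ) (z' : Fin n → ℂ),
    (∀ f ∈ μ'.support, f ∈ Set.Icc (0 : ℝ) 1) →
    (∀ l : Fin n, y l = Fmap n μ' l + z' l) →
    (μ', z') ≠ (μ, z) →
    tvNorm μ + lam * ∑ l : Fin n, ‖z l‖ < tvNorm μ' + lam * ∑ l : Fin n, ‖z' l‖

lemma tvNorm_eq_sum (μ : ℝ →₀ ℂ) (S : Finset ℝ) (hS : μ.support ⊆ S) :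
    tvNorm μ = ∑ f ∈ S, ‖μ f‖ := by
  unfold tvNorm
  exact Finset.sum_subset hS (fun x _ hx => by
    simp [Finsupp.notMem_support_iff.mp hx])

lemma Fmap_eq_sum (n : ℕ) (μ : ℝ →₀ ℂ) (S : Finset ℝ) (hS : μ.support ⊆ S) (l : Fin n) :
    Fmap n μ l = ∑ f ∈ S, μ f * Complex.exp (Complex.I * (2 * π * ((l : ℕ) + 1) * f)) := by
  unfold Fmap
  exact Finset.sum_subset hS (fun x _ hx => by
    simp [Finsupp.notMem_support_iff.mp hx])

lemma Fmap_add (n : ℕ) (a b : ℝ →₀ ℂ) (l : Fin n) :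
    Fmap n (a + b) l = Fmap n a l + Fmap n b l := by
  rw [Fmap_eq_sum n (a + b) (a.support ∪ b.support) Finsupp.support_add l,
      Fmap_eq_sum n a (a.support ∪ b.support) Finset.subset_union_left l,
      Fmap_eq_sum n b (a.support ∪ b.support) Finset.subset_union_right l,
      ← Finset.sum_add_distrib]
  apply Finset.sum_congr rfl
  intro f _
  simp [Finsupp.add_apply, add_mul]

lemma tvNorm_add_le (a b : ℝ →₀ ℂ) : tvNorm (a + b) ≤ tvNorm a + tvNorm b := by
  rw [tvNorm_eq_sum (a + b) (a.support ∪ b.support) Finsupp.support_add,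
      tvNorm_eq_sum a (a.support ∪ b.support) Finset.subset_union_left,
      tvNorm_eq_sum b (a.support ∪ b.support) Finset.subset_union_right,
      ← Finset.sum_add_distrib]
  apply Finset.sum_le_sum
  intro f _
  simpa using norm_add_le (a f) (b f)

/-- If `(μ, z)` is the unique minimizer for the data `y = F_n μ + z`, then any trimmed
pair `(μ', z')` (obtained by restricting `μ` to a subset `T'` of its support and `z` to a
subset `Ω'` of its support) is the unique minimizer for the data `y' = F_n μ' + z'`,
with the same regularization parameter `λ`. -/
theorem trimmed_solution (n : ℕ) (lam : ℝ) (hlam : 0 < lam)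
    (μ : ℝ →₀ ℂ) (z : Fin n → ℂ)
    (h : IsUniqueMin n lam (fun l => Fmap n μ l + z l) μ z)
    (T' : Finset ℝ) (hT' : T' ⊆ μ.support)
    (Ω' : Finset (Fin n)) (hΩ' : ∀ l ∈ Ω', z l ≠ 0)
    (μ' : ℝ →₀ ℂ) (hμ' : ∀ f : ℝ, μ' f = if f ∈ T' then μ f else 0)
    (z' : Fin n → ℂ) (hz' : ∀ l : Fin n, z' l = if l ∈ Ω' then z l else 0) :
    IsUniqueMin n lam (fun l => Fmap n μ' l + z' l) μ' z' := by
  obtain ⟨hsupp, _, hmin⟩ := h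
  set ρ : ℝ →₀ ℂ := μ - μ' with hρ
  have hρ_apply : ∀ f, ρ f = μ f - μ' f := fun f => Finsupp.sub_apply μ μ' f
  -- support of μ' ⊆ support μ
  have hμ'supp : μ'.support ⊆ μ.support := by
    intro f hf
    rw [Finsupp.mem_support_iff] at hf ⊢
    intro h0
    apply hf
    rw [hμ' f]
    split <;> simp [h0]
  have hρsupp : ρ.support ⊆ μ.support := by
    intro f hf
    rw [Finsupp.mem_support_iff] at hf ⊢
    intro h0
    apply hf
    rw [hρ_apply f, h0, hμ' f]
    split <;> simp [h0]
  -- pointwise decomposition of norms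
  have hnormμ : ∀ f, ‖μ f‖ = ‖μ' f‖ + ‖ρ f‖ := by
    intro f
    rw [hρ_apply f, hμ' f]
    by_cases hf : f ∈ T' <;> simp [hf]
  have hnormz : ∀ l, ‖z l‖ = ‖z' l‖ + ‖z l - z' l‖ := by
    intro l
    rw [hz' l]
    by_cases hl : l ∈ Ω' <;> simp [hl]
  have hμsplit : tvNorm μ = tvNorm μ' + tvNorm ρ := by
    rw [tvNorm_eq_sum μ μ.support le_rfl,
        tvNorm_eq_sum μ' μ.support hμ'supp,
        tvNorm_eq_sum ρ μ.support hρsupp, ← Finset.sum_add_distrib]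
    exact Finset.sum_congr rfl fun f _ => hnormμ f
  have hzsplit : ∑ l : Fin n, ‖z l‖ = (∑ l : Fin n, ‖z' l‖) + ∑ l : Fin n, ‖z l - z' l‖ := by
    rw [← Finset.sum_add_distrib]
    exact Finset.sum_congr rfl fun l _ => hnormz l
  have hμ'ρ : μ' + ρ = μ := by
    ext f
    simp [hρ_apply f]
  refine ⟨fun f hf => hsupp f (hμ'supp hf), fun l => rfl, ?_⟩
  intro ν w hνsupp hνfeas hne
  -- consider the augmented pair
  have key := hmin (ν + ρ) (fun l => w l + (z l - z' l))
    (by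
      intro f hf
      rcases Finset.mem_union.mp (Finsupp.support_add hf) with hf | hf
      · exact hνsupp f hf
      · exact hsupp f (hρsupp hf))
    (by
      intro l
      have h1 := hνfeas l
      simp only at h1
      have h2 : Fmap n μ l = Fmap n μ' l + Fmap n ρ l := by
        rw [← Fmap_add, hμ'ρ]
      simp only [Fmap_add n ν ρ l]
      rw [h2]
      linear_combination h1)
    (by
      intro heq
      apply hne
      have h1 : ν + ρ = μ := congrArg Prod.fst heq
      have h2 : (fun l => w l + (z l - z' l)) = z := congrArg Prod.snd heq
      have hν : ν = μ' := by
        have : ν + ρ = μ' + ρ := by rw [h1, hμ'ρ]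
        exact add_right_cancel this
      have hw : w = z' := by
        funext l
        have := congrFun h2 l
        linear_combination this
      rw [hν, hw])
  have hA : tvNorm (ν + ρ) ≤ tvNorm ν + tvNorm ρ := tvNorm_add_le ν ρ
  have hB : ∑ l : Fin n, ‖w l + (z l - z' l)‖ ≤
      (∑ l : Fin n, ‖w l‖) + ∑ l : Fin n, ‖z l - z' l‖ := by
    rw [← Finset.sum_add_distrib]
    exact Finset.sum_le_sum fun l _ => norm_add_le _ _
  rw [hμsplit, hzsplit] at key
  nlinarith [key, hA, hB, hlam.le, mul_le_mul_of_nonneg_left hB hlam.le]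
end

section
/- Let T ⊂ [0,1] be a finite set with wrap-around minimum separation Δ(T) ≥ Δ_min = 1.26/m for m ≥ 10³. Fix f_i ∈ T and a constant C > 0, and suppose a kernel derivative bound |D^{(ℓ)}(f)| ≤ (2πm)^ℓ for all f and |D^{(ℓ)}(f)| ≤ 1.1·2^{ℓ-2}π^ℓ m^{ℓ-1}/|f| for |f| ≥ 80/m (wrap-around distance). Then with κ ≤ 0.468/m, ∑_{j=1}^k κ^ℓ |D^{(ℓ)}(f_i − f_j)| ≤ 130 π^ℓ log k for each ℓ ∈ {0,1,2}, provided k ≥ 3. -/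
open Real Complex

lemma periodic_iteratedDeriv {D : ℝ → ℂ} (h : Function.Periodic D 1) (ℓ : ℕ) :
    Function.Periodic (iteratedDeriv ℓ D) 1 := by
  induction ℓ with
  | zero => simpa using h
  | succ n ih =>
    intro x
    rw [iteratedDeriv_succ]
    have he : (fun y => iteratedDeriv n D (y + 1)) = iteratedDeriv n D := funext fun y => ih y
    calc deriv (iteratedDeriv n D) (x + 1)
        = deriv (fun y => iteratedDeriv n D (y + 1)) x := (deriv_comp_add_const _ _ _).symm
      _ = deriv (iteratedDeriv n D) x := by rw [he]

lemma sum_inv_distinct_le (k : ℕ) (R : Finset ℕ) (h0 : ∀ r ∈ R, 1 ≤ r)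
    (hcard : R.card ≤ k) : ∑ r ∈ R, (1 : ℝ) / r ≤ 2 + Real.log k := by
  classical
  have hsplit : ∑ r ∈ R, (1 : ℝ) / r
      = ∑ r ∈ R.filter (· ≤ k), (1 : ℝ) / r + ∑ r ∈ R.filter (¬ · ≤ k), (1 : ℝ) / r :=
    (Finset.sum_filter_add_sum_filter_not R _ _).symm
  have h1 : ∑ r ∈ R.filter (· ≤ k), (1 : ℝ) / r ≤ 1 + Real.log k := by
    have hsub : R.filter (· ≤ k) ⊆ Finset.Icc 1 k := by
      intro r hr
      simp only [Finset.mem_filter] at hr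
      exact Finset.mem_Icc.mpr ⟨h0 r hr.1, hr.2⟩
    have h2 : ∑ r ∈ R.filter (· ≤ k), (1 : ℝ) / r ≤ ∑ r ∈ Finset.Icc 1 k, (1 : ℝ) / r :=
      Finset.sum_le_sum_of_subset_of_nonneg hsub (by intro r _ _; positivity)
    refine h2.trans ?_
    have := harmonic_le_one_add_log k
    rw [harmonic_eq_sum_Icc] at this
    push_cast at this
    simpa [one_div] using this
  have h2 : ∑ r ∈ R.filter (¬ · ≤ k), (1 : ℝ) / r ≤ 1 := by
    rcases Nat.eq_zero_or_pos k with hk0 | hk0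
    · subst hk0
      have : R = ∅ := Finset.card_eq_zero.mp (Nat.le_zero.mp hcard)
      simp [this]
    have hb : ∀ r ∈ R.filter (¬ · ≤ k), (1 : ℝ) / r ≤ 1 / k := by
      intro r hr
      simp only [Finset.mem_filter, not_le] at hr
      apply one_div_le_one_div_of_le
      · exact_mod_cast hk0
      · exact_mod_cast hr.2.le
    calc ∑ r ∈ R.filter (¬ · ≤ k), (1 : ℝ) / r ≤ (R.filter (¬ · ≤ k)).card • ((1:ℝ) / k) :=
          Finset.sum_le_card_nsmul _ _ _ hb
      _ ≤ k • ((1:ℝ)/k) := by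
          apply nsmul_le_nsmul_left (by positivity)
          exact le_trans (Finset.card_filter_le _ _) hcard
      _ ≤ 1 := by
          rw [nsmul_eq_mul, mul_one_div]
          exact div_self_le_one _
  rw [hsplit]; linarith

lemma log_three_lb : (1.0397 : ℝ) ≤ Real.log 3 := by
  have h2 : (0.6931471803 : ℝ) < Real.log 2 := Real.log_two_gt_d9
  have h89 : Real.log 8 ≤ Real.log 9 := Real.log_le_log (by norm_num) (by norm_num)
  have h8 : Real.log 8 = 3 * Real.log 2 := by
    rw [show (8:ℝ) = 2^3 by norm_num, Real.log_pow]; push_cast; ring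
  have h9 : Real.log 9 = 2 * Real.log 3 := by
    rw [show (9:ℝ) = 3^2 by norm_num, Real.log_pow]; push_cast; ring
  nlinarith


lemma term_bound_unif (ℓ : ℕ) (κ M v : ℝ) (hκ : 0 ≤ κ) (hκm : κ * M ≤ 0.468)
    (hM : 0 < M) (h1 : v ≤ (2 * π * M) ^ ℓ) : κ ^ ℓ * v ≤ π ^ ℓ := by
  have hπpos := Real.pi_pos
  have h2 : κ ^ ℓ * (2 * π * M) ^ ℓ ≤ π ^ ℓ := by
    rw [← mul_pow]
    apply pow_le_pow_left₀ (by positivity)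
    nlinarith
  calc κ ^ ℓ * v ≤ κ ^ ℓ * (2 * π * M) ^ ℓ := mul_le_mul_of_nonneg_left h1 (by positivity)
    _ ≤ π ^ ℓ := h2

lemma term_bound_far (ℓ : ℕ) (κ M x v : ℝ) (hκ : 0 ≤ κ) (hκm : κ * M ≤ 0.468)
    (hM : 0 < M) (hx : 0 < x)
    (h1 : v ≤ 1.1 * (2 : ℝ) ^ ((ℓ : ℤ) - 2) * π ^ ℓ * M ^ ((ℓ : ℤ) - 1) / x) :
    κ ^ ℓ * v ≤ 0.275 * π ^ ℓ / (M * x) := by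
  have hπpos := Real.pi_pos
  have h2e : (2:ℝ) ^ ((ℓ:ℤ) - 2) = 2 ^ ℓ / 4 := by
    rw [zpow_sub₀ (by norm_num : (2:ℝ) ≠ 0)]
    norm_num [zpow_natCast]
  have hme : M ^ ((ℓ:ℤ) - 1) = M ^ ℓ / M := by
    rw [zpow_sub₀ hM.ne']
    norm_num [zpow_natCast]
  have hkey : (κ * (2 * M)) ^ ℓ ≤ 1 := by
    apply pow_le_one₀ (by positivity)
    nlinarith
  have heq : κ ^ ℓ * (1.1 * ((2:ℝ) ^ ℓ / 4) * π ^ ℓ * (M ^ ℓ / M) / x)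
      = (1.1/4) * ((κ * (2 * M)) ^ ℓ) * π ^ ℓ / (M * x) := by
    rw [mul_pow, mul_pow]
    field_simp
  calc κ ^ ℓ * v ≤ κ ^ ℓ * (1.1 * (2:ℝ) ^ ((ℓ:ℤ) - 2) * π ^ ℓ * M ^ ((ℓ:ℤ) - 1) / x) :=
        mul_le_mul_of_nonneg_left h1 (by positivity)
    _ = (1.1/4) * ((κ * (2 * M)) ^ ℓ) * π ^ ℓ / (M * x) := by rw [h2e, hme, heq]
    _ ≤ (1.1/4) * 1 * π ^ ℓ / (M * x) := by gcongr
    _ = 0.275 * π ^ ℓ / (M * x) := by norm_num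

set_option maxHeartbeats 2000000 in
/-- Row-sum bound for the Dirichlet kernel and its derivatives: under a wrap-around minimum
separation `1.26/m` of the frequencies, the uniform bound `|D^{(ℓ)}| ≤ (2πm)^ℓ` and the
decay bound `|D^{(ℓ)}(f)| ≤ 1.1·2^{ℓ-2}π^ℓ m^{ℓ-1}/|f|` for `80/m ≤ |f| ≤ 1/2`, one has
`∑_j κ^ℓ |D^{(ℓ)}(f_i − f_j)| ≤ 130 π^ℓ log k` for each `ℓ ∈ {0,1,2}`. -/
theorem dirichlet_row_sum_bound (m k : ℕ) (hm : 1000 ≤ m) (hk : 3 ≤ k)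
    (f : Fin k → ℝ) (hf : ∀ j, f j ∈ Set.Icc (0 : ℝ) 1)
    (hsep : ∀ i j : Fin k, i ≠ j → ∀ t : ℤ, 1.26 / m ≤ |f i - f j + t|)
    (D : ℝ → ℂ) (hper : Function.Periodic D 1)
    (hbound : ∀ ℓ : ℕ, ℓ ≤ 2 → ∀ x : ℝ, ‖iteratedDeriv ℓ D x‖ ≤ (2 * π * m) ^ ℓ)
    (hdecay : ∀ ℓ : ℕ, ℓ ≤ 2 → ∀ x : ℝ, 80 / m ≤ |x| → |x| ≤ 1 / 2 →
      ‖iteratedDeriv ℓ D x‖ ≤ 1.1 * (2 : ℝ) ^ ((ℓ : ℤ) - 2) * π ^ ℓ *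
        (m : ℝ) ^ ((ℓ : ℤ) - 1) / |x|)
    (κ : ℝ) (hκpos : 0 < κ) (hκ : κ ≤ 0.468 / m) (i : Fin k) :
    ∀ ℓ : ℕ, ℓ ≤ 2 →
      ∑ j : Fin k, κ ^ ℓ * ‖iteratedDeriv ℓ D (f i - f j)‖ ≤ 130 * π ^ ℓ * Real.log k := by
  classical
  intro ℓ hℓ
  have hm1 : (1000:ℝ) ≤ m := by exact_mod_cast hm
  have hmpos : (0:ℝ) < m := by linarith
  have hπpos : 0 < π := Real.pi_pos
  have hπ1 : (1:ℝ) ≤ π := by nlinarith [Real.pi_gt_three]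
  have hπl : (1:ℝ) ≤ π ^ ℓ := one_le_pow₀ hπ1
  have hκm : κ * m ≤ 0.468 := (le_div_iff₀ hmpos).mp hκ
  -- the wrapped differences
  set s : Fin k → ℝ := fun j => f i - f j - round (f i - f j) with hs_def
  have hs_half : ∀ j, |s j| ≤ 1 / 2 := fun j => abs_sub_round _
  have hDrw : ∀ j, iteratedDeriv ℓ D (f i - f j) = iteratedDeriv ℓ D (s j) := by
    intro j
    have hp := periodic_iteratedDeriv hper ℓ
    have h := hp.sub_int_mul_eq (n := round (f i - f j)) (x := f i - f j)
    rw [mul_one] at h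
    exact h.symm
  have hs_sep : ∀ j j' : Fin k, j ≠ j' → 1.26 / m ≤ |s j - s j'| := by
    intro j j' hne
    have h := hsep j' j hne.symm (round (f i - f j') - round (f i - f j))
    have heq : s j - s j' = f j' - f j + ((round (f i - f j') - round (f i - f j) : ℤ) : ℝ) := by
      simp only [hs_def]; push_cast; ring
    rw [heq]; exact h
  -- integer labels
  set n : Fin k → ℤ := fun j => ⌊s j / (1.26 / m)⌋ with hn_def
  have hΔpos : (0:ℝ) < 1.26 / m := by positivity
  have hfl : ∀ j, (n j : ℝ) * (1.26 / m) ≤ s j ∧ s j < ((n j : ℝ) + 1) * (1.26 / m) := by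
    intro j
    constructor
    · have h := Int.floor_le (s j / (1.26 / m))
      have h3 : (n j : ℝ) = (⌊s j / (1.26 / (m:ℝ))⌋ : ℝ) := by rw [hn_def]
      rw [h3]
      calc (⌊s j / (1.26 / (m:ℝ))⌋ : ℝ) * (1.26 / m) ≤ (s j / (1.26 / m)) * (1.26 / m) :=
            mul_le_mul_of_nonneg_right h hΔpos.le
        _ = s j := div_mul_cancel₀ _ hΔpos.ne'
    · have h := Int.lt_floor_add_one (s j / (1.26 / m))
      have h2 := (div_lt_iff₀ hΔpos).mp h
      have h3 : (n j : ℝ) = (⌊s j / (1.26 / (m:ℝ))⌋ : ℝ) := by rw [hn_def]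
      rw [h3]
      linarith
  have hn_inj : ∀ j j', n j = n j' → j = j' := by
    intro j j' h
    by_contra hne
    have h1 := (hfl j).1
    have h2 := (hfl j).2
    have h3 := (hfl j').1
    have h4 := (hfl j').2
    rw [h] at h1 h2
    have hsep' := hs_sep j j' hne
    have : |s j - s j'| < 1.26 / m := by
      rw [abs_sub_lt_iff]; constructor <;> linarith
    linarith
  -- lower and upper bounds via labels
  have habs_lb : ∀ j, (|(n j : ℝ)| - 1) * (1.26 / m) ≤ |s j| := by
    intro j
    have h1 := (hfl j).1
    have h2 := (hfl j).2
    rcases le_or_gt 0 (n j) with h | h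
    · have hn0 : (0:ℝ) ≤ (n j : ℝ) := by exact_mod_cast h
      have hs0 : 0 ≤ s j := le_trans (by positivity) h1
      rw [_root_.abs_of_nonneg hs0, _root_.abs_of_nonneg hn0]
      nlinarith
    · have hn0 : (n j : ℝ) + 1 ≤ 0 := by exact_mod_cast h
      have hs0 : s j < 0 := lt_of_lt_of_le h2 (by nlinarith)
      rw [_root_.abs_of_neg hs0, _root_.abs_of_neg (by exact_mod_cast h : (n j:ℝ) < 0)]
      nlinarith
  have habs_ub : ∀ j, |s j| ≤ (|(n j : ℝ)| + 1) * (1.26 / m) := by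
    intro j
    have h1 := (hfl j).1
    have h2 := (hfl j).2
    rcases le_or_gt 0 (n j) with h | h
    · have hn0 : (0:ℝ) ≤ (n j : ℝ) := by exact_mod_cast h
      have hs0 : 0 ≤ s j := le_trans (by positivity) h1
      rw [_root_.abs_of_nonneg hs0, _root_.abs_of_nonneg hn0]
      nlinarith
    · have hn0 : (n j : ℝ) + 1 ≤ 0 := by exact_mod_cast h
      have hs0 : s j < 0 := lt_of_lt_of_le h2 (by nlinarith)
      rw [_root_.abs_of_neg hs0, _root_.abs_of_neg (by exact_mod_cast h : (n j:ℝ) < 0)]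
      nlinarith
  have hterm_unif : ∀ x : ℝ, κ ^ ℓ * ‖iteratedDeriv ℓ D x‖ ≤ π ^ ℓ :=
    fun x => term_bound_unif ℓ κ m _ hκpos.le hκm hmpos (hbound ℓ hℓ x)
  have hterm_far : ∀ x : ℝ, 80 / m ≤ |x| → |x| ≤ 1/2 →
      κ ^ ℓ * ‖iteratedDeriv ℓ D x‖ ≤ 0.275 * π ^ ℓ / (m * |x|) := by
    intro x h80 hhalf
    have hx0 : (0:ℝ) < |x| := lt_of_lt_of_le (by positivity) h80
    exact term_bound_far ℓ κ m |x| _ hκpos.le hκm hmpos hx0 (hdecay ℓ hℓ x h80 hhalf)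
  -- split near/far
  set g : Fin k → ℝ := fun j => κ ^ ℓ * ‖iteratedDeriv ℓ D (s j)‖ with hg_def
  have hg0 : ∀ j, 0 ≤ g j := fun j => by positivity
  have hsum_rw : ∑ j : Fin k, κ ^ ℓ * ‖iteratedDeriv ℓ D (f i - f j)‖ = ∑ j : Fin k, g j :=
    Finset.sum_congr rfl (fun j _ => by rw [hDrw j])
  set F : Finset (Fin k) := Finset.univ.filter (fun j => 80 / (m:ℝ) ≤ |s j|) with hF_def
  set Nr : Finset (Fin k) := Finset.univ.filter (fun j => ¬ 80 / (m:ℝ) ≤ |s j|) with hNr_def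
  have hsplit : ∑ j : Fin k, g j = ∑ j ∈ F, g j + ∑ j ∈ Nr, g j :=
    (Finset.sum_filter_add_sum_filter_not Finset.univ _ _).symm
  -- near count
  have hNcard : Nr.card ≤ 129 := by
    have hmap : ∀ j ∈ Nr, n j ∈ Finset.Icc (-64 : ℤ) 64 := by
      intro j hj
      have hj : ¬ 80 / (m:ℝ) ≤ |s j| := (Finset.mem_filter.mp hj).2
      rw [not_le] at hj
      have hlb := habs_lb j
      have hms : |s j| * m < 80 := (lt_div_iff₀ hmpos).mp hj
      have h1 : (|(n j : ℝ)| - 1) * 1.26 ≤ |s j| * m := by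
        have := mul_le_mul_of_nonneg_right hlb hmpos.le
        calc (|(n j : ℝ)| - 1) * 1.26 = (|(n j : ℝ)| - 1) * (1.26 / m) * m := by
              field_simp
          _ ≤ |s j| * m := this
      have hA : |(n j : ℝ)| < 65 := by nlinarith
      have hA' : |n j| < 65 := by
        rw [← Int.cast_abs] at hA
        exact_mod_cast hA
      rw [Finset.mem_Icc]
      rw [abs_lt] at hA'
      omega
    calc Nr.card ≤ (Finset.Icc (-64 : ℤ) 64).card :=
          Finset.card_le_card_of_injOn n hmap (fun a _ b _ h => hn_inj a b h)
      _ = 129 := by rw [Int.card_Icc]; rfl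
  have hNear : ∑ j ∈ Nr, g j ≤ 129 * π ^ ℓ := by
    calc ∑ j ∈ Nr, g j ≤ Nr.card • (π ^ ℓ) :=
          Finset.sum_le_card_nsmul _ _ _ (fun j _ => hterm_unif (s j))
      _ ≤ 129 • (π ^ ℓ) := nsmul_le_nsmul_left (by positivity) hNcard
      _ = 129 * π ^ ℓ := by rw [nsmul_eq_mul]; norm_num
  -- far: label size
  have hFA : ∀ j ∈ F, (2:ℝ) ≤ |(n j : ℝ)| := by
    intro j hj
    have hj : 80 / (m:ℝ) ≤ |s j| := (Finset.mem_filter.mp hj).2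
    have hub := habs_ub j
    have h1 : 80 ≤ (|(n j : ℝ)| + 1) * 1.26 := by
      have h2 : 80 / (m:ℝ) ≤ (|(n j : ℝ)| + 1) * (1.26 / m) := le_trans hj hub
      have := mul_le_mul_of_nonneg_right h2 hmpos.le
      calc (80:ℝ) = 80 / m * m := by field_simp
        _ ≤ (|(n j : ℝ)| + 1) * (1.26 / m) * m := this
        _ = (|(n j : ℝ)| + 1) * 1.26 := by field_simp
    linarith
  have hFar_term : ∀ j ∈ F, g j ≤ 0.44 * π ^ ℓ * (1 / ((n j).natAbs : ℝ)) := by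
    intro j hj
    have hj' : 80 / (m:ℝ) ≤ |s j| := (Finset.mem_filter.mp hj).2
    have h1 := hterm_far (s j) hj' (hs_half j)
    have hA2 := hFA j hj
    have hAeq : ((n j).natAbs : ℝ) = |(n j : ℝ)| := by
      rw [Nat.cast_natAbs, Int.cast_abs]
    have hlb := habs_lb j
    have hx0 : (0:ℝ) < |s j| := lt_of_lt_of_le (by positivity) hj'
    have hkey : 0.63 * |(n j : ℝ)| ≤ m * |s j| := by
      have := mul_le_mul_of_nonneg_left hlb hmpos.le
      have heq : (m:ℝ) * ((|(n j : ℝ)| - 1) * (1.26 / m)) = 1.26 * (|(n j : ℝ)| - 1) := by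
        field_simp
      nlinarith
    calc g j ≤ 0.275 * π ^ ℓ / (m * |s j|) := h1
      _ ≤ 0.275 * π ^ ℓ / (0.63 * |(n j : ℝ)|) := by
          apply div_le_div_of_nonneg_left (by positivity) (by nlinarith) hkey
      _ ≤ 0.44 * π ^ ℓ * (1 / ((n j).natAbs : ℝ)) := by
          rw [hAeq, mul_one_div, div_le_div_iff₀ (by nlinarith) (by nlinarith)]
          nlinarith [mul_nonneg (le_of_lt (pow_pos hπpos ℓ)) (abs_nonneg ((n j : ℝ)))]
  -- sum of reciprocals of distinct labels
  have hFnat2 : ∀ j ∈ F, 2 ≤ (n j).natAbs := by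
    intro j hj
    have h := hFA j hj
    have hAeq : ((n j).natAbs : ℝ) = |(n j : ℝ)| := by
      rw [Nat.cast_natAbs, Int.cast_abs]
    rw [← hAeq] at h
    exact_mod_cast h
  have hsum_invA : ∑ j ∈ F, (1:ℝ) / ((n j).natAbs : ℝ) ≤ 2 * (2 + Real.log k) := by
    have hFsplit : ∑ j ∈ F, (1:ℝ) / ((n j).natAbs : ℝ)
        = ∑ j ∈ F.filter (fun j => 0 ≤ n j), (1:ℝ) / ((n j).natAbs : ℝ)
          + ∑ j ∈ F.filter (fun j => ¬ 0 ≤ n j), (1:ℝ) / ((n j).natAbs : ℝ) :=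
      (Finset.sum_filter_add_sum_filter_not F _ _).symm
    have hpart : ∀ (P : Fin k → Prop) [DecidablePred P],
        (∀ a b : Fin k, P a → P b → (n a).natAbs = (n b).natAbs → n a = n b) →
        ∑ j ∈ F.filter (fun j => P j), (1:ℝ) / ((n j).natAbs : ℝ) ≤ 2 + Real.log k := by
      intro P _ hPinj
      have hinj : Set.InjOn (fun j => (n j).natAbs) (F.filter (fun j => P j)) := by
        intro a ha b hb hab
        simp only [Finset.coe_filter, Set.mem_setOf_eq] at ha hb
        exact hn_inj a b (hPinj a b ha.2 hb.2 hab)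
      have hsum_im : ∑ r ∈ (F.filter (fun j => P j)).image (fun j => (n j).natAbs), (1:ℝ) / (r : ℝ)
          = ∑ j ∈ F.filter (fun j => P j), (1:ℝ) / ((n j).natAbs : ℝ) :=
        Finset.sum_image (fun a ha b hb h => hinj ha hb h)
      rw [← hsum_im]
      apply sum_inv_distinct_le k
      · intro r hr
        rw [Finset.mem_image] at hr
        obtain ⟨j, hj, rfl⟩ := hr
        have := hFnat2 j (Finset.mem_of_mem_filter j hj)
        omega
      · calc ((F.filter (fun j => P j)).image (fun j => (n j).natAbs)).card
            ≤ (F.filter (fun j => P j)).card := Finset.card_image_le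
          _ ≤ F.card := Finset.card_filter_le _ _
          _ ≤ (Finset.univ : Finset (Fin k)).card := Finset.card_filter_le _ _
          _ = k := Finset.card_fin k
    have h1 := hpart (fun j => 0 ≤ n j) (fun a b ha hb h => by omega)
    have h2 := hpart (fun j => ¬ 0 ≤ n j) (fun a b ha hb h => by omega)
    rw [hFsplit]; linarith
  have hFar : ∑ j ∈ F, g j ≤ 0.44 * π ^ ℓ * (2 * (2 + Real.log k)) := by
    calc ∑ j ∈ F, g j ≤ ∑ j ∈ F, 0.44 * π ^ ℓ * (1 / ((n j).natAbs : ℝ)) :=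
          Finset.sum_le_sum hFar_term
      _ = 0.44 * π ^ ℓ * ∑ j ∈ F, (1:ℝ) / ((n j).natAbs : ℝ) := by rw [Finset.mul_sum]
      _ ≤ 0.44 * π ^ ℓ * (2 * (2 + Real.log k)) := by
          apply mul_le_mul_of_nonneg_left hsum_invA (by positivity)
  -- conclude
  have hlogk : (1.0397:ℝ) ≤ Real.log k := by
    refine le_trans log_three_lb (Real.log_le_log (by norm_num) ?_)
    exact_mod_cast hk
  rw [hsum_rw, hsplit]
  have hP : (1:ℝ) ≤ π ^ ℓ := hπl
  nlinarith [hNear, hFar, mul_le_mul_of_nonneg_left hlogk (le_of_lt (lt_of_lt_of_le one_pos hP) : (0:ℝ) ≤ π ^ ℓ)]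
end

section
/- Suppose |K̄^{(ℓ)}(f)|·κ^ℓ ≤ C₁ for all f ∈ [−1/2, 1/2] and κ^ℓ|K̄^{(ℓ)}(f)| ≤ C₂ m^{-3}|f|^{-3} for 80/m ≤ |f| ≤ 1/2 (in wrap-around distance). If T ⊂ [0,1] has wrap-around minimum separation at least Δ_min = 1.26/m, then for every f, ∑_{f_j ∈ T} κ^ℓ |K̄^{(ℓ)}(f − f_j)| ≤ 127 C₁ + 2 C₂ ζ(3), where ζ(3) = ∑_{j=1}^∞ 1/j³. -/
open Real Complex

lemma enum_lower (V : Finset ℝ) (Δ a : ℝ)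
    (ha : ∀ y ∈ V, a ≤ y)
    (hsep : ∀ y ∈ V, ∀ y' ∈ V, y ≠ y' → Δ ≤ |y - y'|) :
    ∀ i : ℕ, ∀ hi : i < V.card, a + i * Δ ≤ (V.orderIsoOfFin rfl ⟨i, hi⟩ : ℝ) := by
  intro i
  induction i with
  | zero =>
    intro hi
    simpa using ha _ (V.orderIsoOfFin rfl ⟨0, hi⟩).2
  | succ n ih =>
    intro hi
    have hn : n < V.card := Nat.lt_of_succ_lt hi
    have h1 := ih hn
    have hlt : (V.orderIsoOfFin rfl ⟨n, hn⟩ : ℝ) < (V.orderIsoOfFin rfl ⟨n+1, hi⟩ : ℝ) := by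
      have : (⟨n, hn⟩ : Fin V.card) < ⟨n+1, hi⟩ := by
        simp [Fin.lt_def]
      exact_mod_cast (V.orderIsoOfFin rfl).strictMono this
    have hne : (V.orderIsoOfFin rfl ⟨n+1, hi⟩ : ℝ) ≠ (V.orderIsoOfFin rfl ⟨n, hn⟩ : ℝ) :=
      ne_of_gt hlt
    have hs := hsep _ (V.orderIsoOfFin rfl ⟨n+1, hi⟩).2 _ (V.orderIsoOfFin rfl ⟨n, hn⟩).2 hne
    rw [abs_of_pos (by linarith)] at hs
    push_cast
    linarith

lemma zeta3_summable : Summable (fun j : ℕ => 1 / ((j : ℝ) + 1) ^ 3) := by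
  have h : Summable (fun n : ℕ => 1 / (n : ℝ) ^ 3) := by
    rw [Real.summable_one_div_nat_pow]; norm_num
  have := (summable_nat_add_iff 1).2 h
  convert this using 2 with j
  · rfl
  · push_cast; rfl

lemma far_sum (m : ℕ) (hm : 1000 ≤ m) (C₂ : ℝ) (hC₂ : 0 ≤ C₂) (g : ℝ → ℝ)
    (V : Finset ℝ)
    (hmem : ∀ y ∈ V, 80 / m ≤ y)
    (hsep : ∀ y ∈ V, ∀ y' ∈ V, y ≠ y' → 1.26 / m ≤ |y - y'|)
    (hg : ∀ y ∈ V, g y ≤ C₂ / ((m : ℝ) ^ 3 * y ^ 3)) :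
    ∑ y ∈ V, g y ≤ C₂ * ∑' j : ℕ, 1 / ((j : ℝ) + 1) ^ 3 := by
  have hm' : (1000 : ℝ) ≤ m := by exact_mod_cast hm
  have hmpos : (0 : ℝ) < m := by linarith
  have hsum : ∑ y ∈ V, g y = ∑ i : Fin V.card, g (V.orderIsoOfFin rfl i) := by
    rw [← Finset.sum_coe_sort V g]
    exact (Fintype.sum_equiv (V.orderIsoOfFin rfl).toEquiv _ _ (fun i => rfl)).symm
  have hterm : ∀ i : Fin V.card,
      g (V.orderIsoOfFin rfl i) ≤ C₂ * (1 / ((i : ℝ) + 1) ^ 3) := by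
    intro i
    have hi := enum_lower V (1.26 / m) (80 / m) hmem hsep i.1 i.2
    set y : ℝ := (V.orderIsoOfFin rfl i : ℝ) with hy
    have hymem : y ∈ V := (V.orderIsoOfFin rfl i).2
    have hy0 : 80 / m ≤ y := hmem _ hymem
    have hypos : 0 < y := lt_of_lt_of_le (by positivity) hy0
    have hi' : (80 + 1.26 * i) / m ≤ y := by
      have : (80 : ℝ) / m + i * (1.26 / m) = (80 + 1.26 * i) / m := by ring
      linarith [this ▸ hi]
    have hmy : ((i : ℝ) + 1) ≤ m * y := by
      have h2 := (div_le_iff₀ hmpos).mp hi'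
      have : (0 : ℝ) ≤ i := Nat.cast_nonneg i
      nlinarith
    have hpow : ((i : ℝ) + 1) ^ 3 ≤ (m : ℝ) ^ 3 * y ^ 3 := by
      rw [← mul_pow]
      exact pow_le_pow_left₀ (by positivity) hmy 3
    calc g y ≤ C₂ / ((m : ℝ) ^ 3 * y ^ 3) := hg y hymem
      _ ≤ C₂ / ((i : ℝ) + 1) ^ 3 := by gcongr
      _ = C₂ * (1 / ((i : ℝ) + 1) ^ 3) := by ring
  calc ∑ y ∈ V, g y = ∑ i : Fin V.card, g (V.orderIsoOfFin rfl i) := hsum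
    _ ≤ ∑ i : Fin V.card, C₂ * (1 / ((i : ℝ) + 1) ^ 3) :=
        Finset.sum_le_sum (fun i _ => hterm i)
    _ = C₂ * ∑ i ∈ Finset.range V.card, 1 / ((i : ℝ) + 1) ^ 3 := by
        rw [Fin.sum_univ_eq_sum_range (fun n : ℕ => C₂ * (1 / ((n : ℝ) + 1) ^ 3)),
          ← Finset.mul_sum]
    _ ≤ C₂ * ∑' j : ℕ, 1 / ((j : ℝ) + 1) ^ 3 := by
        gcongr
        exact Summable.sum_le_tsum _ (fun j _ => by positivity) zeta3_summable


/-- If `κ^ℓ|K̄^{(ℓ)}(f)| ≤ C₁` everywhere and `κ^ℓ|K̄^{(ℓ)}(f)| ≤ C₂ m⁻³|f|⁻³` for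
`80/m ≤ |f| ≤ 1/2`, and `T ⊂ [0,1]` has wrap-around minimum separation `≥ 1.26/m`, then
for every `f`, `∑_{f_j ∈ T} κ^ℓ|K̄^{(ℓ)}(f − f_j)| ≤ 127 C₁ + 2 C₂ ζ(3)`. -/
theorem kernel_tail_sum_bound (m : ℕ) (hm : 1000 ≤ m) (ℓ : ℕ)
    (K : ℝ → ℂ) (hper : Function.Periodic K 1)
    (κ : ℝ) (hκpos : 0 < κ) (C₁ C₂ : ℝ)
    (hbound : ∀ x : ℝ, κ ^ ℓ * ‖iteratedDeriv ℓ K x‖ ≤ C₁)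
    (hdecay : ∀ x : ℝ, 80 / m ≤ |x| → |x| ≤ 1 / 2 →
      κ ^ ℓ * ‖iteratedDeriv ℓ K x‖ ≤ C₂ / ((m : ℝ) ^ 3 * |x| ^ 3))
    (T : Finset ℝ) (hT : ∀ x ∈ T, x ∈ Set.Icc (0 : ℝ) 1)
    (hsep : ∀ x ∈ T, ∀ x' ∈ T, x ≠ x' → ∀ t : ℤ, 1.26 / m ≤ |x - x' + t|) :
    ∀ f : ℝ, ∑ fj ∈ T, κ ^ ℓ * ‖iteratedDeriv ℓ K (f - fj)‖ ≤
      127 * C₁ + 2 * C₂ * ∑' j : ℕ, 1 / ((j : ℝ) + 1) ^ 3 := by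
  intro f
  have hm' : (1000 : ℝ) ≤ m := by exact_mod_cast hm
  have hmpos : (0 : ℝ) < m := by linarith
  set G : ℝ → ℝ := fun y => κ ^ ℓ * ‖iteratedDeriv ℓ K y‖ with hG
  have hGnn : ∀ y, 0 ≤ G y := fun y => by positivity
  have hC₁ : 0 ≤ C₁ := le_trans (hGnn 0) (hbound 0)
  have hC₂ : 0 ≤ C₂ := by
    have h1 : (80 : ℝ) / m ≤ |(80 : ℝ) / m| := le_abs_self _
    have h2 : |(80 : ℝ) / m| ≤ 1 / 2 := by
      rw [abs_of_pos (by positivity), div_le_iff₀ hmpos]; linarith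
    have h3 := hdecay (80 / m) h1 h2
    have h4 : (0 : ℝ) < (m : ℝ) ^ 3 * |(80 : ℝ) / m| ^ 3 := by positivity
    have h5 : 0 ≤ C₂ / ((m : ℝ) ^ 3 * |(80 : ℝ) / m| ^ 3) := le_trans (hGnn _) h3
    by_contra h
    push_neg at h
    have := div_neg_of_neg_of_pos h h4
    linarith
  -- periodicity of the iterated derivative
  have hperD : Function.Periodic (iteratedDeriv ℓ K) 1 := by
    intro x
    have hK : (fun z => K (z + 1)) = K := funext fun z => hper z
    calc iteratedDeriv ℓ K (x + 1) = iteratedDeriv ℓ (fun z => K (z + 1)) x := by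
          rw [iteratedDeriv_comp_add_const]
      _ = iteratedDeriv ℓ K x := by rw [hK]
  set s : ℝ → ℝ := fun y => (f - y) - (round (f - y) : ℤ) with hs
  have hGs : ∀ a : ℝ, G (s a) = G (f - a) := by
    intro a
    have h := hperD.sub_int_mul_eq (x := f - a) (round (f - a))
    rw [mul_one] at h
    simp only [hs, hG, h]
  have key : ∀ a ∈ T, ∀ b ∈ T, a ≠ b → 1.26 / m ≤ |s a - s b| := by
    intro a ha b hb hab
    have h := hsep b hb a ha (Ne.symm hab) (round (f - b) - round (f - a))
    have heq : s a - s b = b - a + ((round (f - b) - round (f - a) : ℤ) : ℝ) := by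
      simp only [hs]; push_cast; ring
    rw [heq]; exact h
  have hinj : Set.InjOn s T := by
    intro a ha b hb hab
    by_contra hne
    have := key a ha b hb hne
    rw [hab, sub_self, abs_zero] at this
    have : (0 : ℝ) < 1.26 / m := by positivity
    linarith
  set U : Finset ℝ := T.image s with hU
  have hsumT : ∑ fj ∈ T, G (f - fj) = ∑ y ∈ U, G y := by
    rw [hU, Finset.sum_image (fun a ha b hb h => hinj ha hb h)]
    exact Finset.sum_congr rfl fun a _ => (hGs a).symm
  have hUhalf : ∀ y ∈ U, |y| ≤ 1 / 2 := by
    intro y hy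
    obtain ⟨a, _, rfl⟩ := Finset.mem_image.mp hy
    exact abs_sub_round (f - a)
  have hUsep : ∀ y ∈ U, ∀ y' ∈ U, y ≠ y' → 1.26 / m ≤ |y - y'| := by
    intro y hy y' hy' hne
    obtain ⟨a, ha, rfl⟩ := Finset.mem_image.mp hy
    obtain ⟨b, hb, rfl⟩ := Finset.mem_image.mp hy'
    exact key a ha b hb (fun h => hne (by rw [h]))
  -- split into near and far parts
  set N : Finset ℝ := U.filter (fun y => |y| < 80 / m) with hN
  set Fa : Finset ℝ := U.filter (fun y => ¬ |y| < 80 / m) with hFa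
  set P : Finset ℝ := Fa.filter (fun y => 0 < y) with hP
  set M : Finset ℝ := Fa.filter (fun y => ¬ 0 < y) with hM
  have hsplit : ∑ y ∈ U, G y = ∑ y ∈ N, G y + (∑ y ∈ P, G y + ∑ y ∈ M, G y) := by
    have h1 : ∑ y ∈ P, G y + ∑ y ∈ M, G y = ∑ y ∈ Fa, G y :=
      Finset.sum_filter_add_sum_filter_not Fa _ _
    have h2 : ∑ y ∈ N, G y + ∑ y ∈ Fa, G y = ∑ y ∈ U, G y :=
      Finset.sum_filter_add_sum_filter_not U _ _
    rw [h1, h2]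
  -- near part: at most 127 points
  have hNcard : N.card ≤ 127 := by
    by_contra hc
    push_neg at hc
    have h127 : 127 < N.card := hc
    have hNlow : ∀ y ∈ N, -(80 / m) ≤ y := by
      intro y hy
      have := (Finset.mem_filter.mp hy).2
      have h := abs_lt.mp this
      linarith
    have hNsep : ∀ y ∈ N, ∀ y' ∈ N, y ≠ y' → 1.26 / m ≤ |y - y'| := by
      intro y hy y' hy' hne
      exact hUsep y (Finset.mem_filter.mp hy).1 y' (Finset.mem_filter.mp hy').1 hne
    have h := enum_lower N (1.26 / m) (-(80 / m)) hNlow hNsep 127 h127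
    have hmem : (N.orderIsoOfFin rfl ⟨127, h127⟩ : ℝ) ∈ N := (N.orderIsoOfFin rfl _).2
    have habs := (Finset.mem_filter.mp hmem).2
    have hub : (N.orderIsoOfFin rfl ⟨127, h127⟩ : ℝ) < 80 / m := (abs_lt.mp habs).2
    have e1 : ((127 : ℕ) : ℝ) * (1.26 / m) = 160.02 / m := by push_cast; ring
    have e2 : (80 : ℝ) / m + 80 / m = 160 / m := by ring
    have h4 : (160.02 : ℝ) / m < 160 / m := by linarith
    rw [div_lt_div_iff₀ hmpos hmpos] at h4
    linarith
  have hNsum : ∑ y ∈ N, G y ≤ 127 * C₁ := by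
    calc ∑ y ∈ N, G y ≤ ∑ _y ∈ N, C₁ := Finset.sum_le_sum fun y _ => hbound y
      _ = N.card * C₁ := by rw [Finset.sum_const, nsmul_eq_mul]
      _ ≤ 127 * C₁ := by
          have : (N.card : ℝ) ≤ 127 := by exact_mod_cast hNcard
          nlinarith
  -- far positive part
  have hPsum : ∑ y ∈ P, G y ≤ C₂ * ∑' j : ℕ, 1 / ((j : ℝ) + 1) ^ 3 := by
    apply far_sum m hm C₂ hC₂ G P
    · intro y hy
      have h1 := (Finset.mem_filter.mp hy).2
      have h2 := (Finset.mem_filter.mp (Finset.mem_filter.mp hy).1).2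
      push_neg at h2
      rwa [abs_of_pos h1] at h2
    · intro y hy y' hy' hne
      exact hUsep y (Finset.mem_filter.mp (Finset.mem_filter.mp hy).1).1 y'
        (Finset.mem_filter.mp (Finset.mem_filter.mp hy').1).1 hne
    · intro y hy
      have h1 := (Finset.mem_filter.mp hy).2
      have h2 := (Finset.mem_filter.mp (Finset.mem_filter.mp hy).1).2
      push_neg at h2
      have h3 := hUhalf y (Finset.mem_filter.mp (Finset.mem_filter.mp hy).1).1
      have := hdecay y h2 h3
      rwa [abs_of_pos h1] at this
  -- far negative part
  have hMsum : ∑ y ∈ M, G y ≤ C₂ * ∑' j : ℕ, 1 / ((j : ℝ) + 1) ^ 3 := by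
    have himg : ∑ y ∈ M.image Neg.neg, G (-y) = ∑ y ∈ M, G y := by
      rw [Finset.sum_image (fun a _ b _ h => neg_injective h)]
      exact Finset.sum_congr rfl fun a _ => by rw [neg_neg]
    rw [← himg]
    apply far_sum m hm C₂ hC₂ (fun y => G (-y)) (M.image Neg.neg)
    · intro z hz
      obtain ⟨y, hy, rfl⟩ := Finset.mem_image.mp hz
      have h1 := (Finset.mem_filter.mp hy).2
      have h2 := (Finset.mem_filter.mp (Finset.mem_filter.mp hy).1).2
      push_neg at h1 h2
      rwa [abs_of_nonpos h1] at h2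
    · intro z hz z' hz' hne
      obtain ⟨y, hy, rfl⟩ := Finset.mem_image.mp hz
      obtain ⟨y', hy', rfl⟩ := Finset.mem_image.mp hz'
      have := hUsep y (Finset.mem_filter.mp (Finset.mem_filter.mp hy).1).1 y'
        (Finset.mem_filter.mp (Finset.mem_filter.mp hy').1).1
        (fun h => hne (by rw [h]))
      rw [show -y - -y' = y' - y by ring, abs_sub_comm]
      exact this
    · intro z hz
      obtain ⟨y, hy, rfl⟩ := Finset.mem_image.mp hz
      have h1 := (Finset.mem_filter.mp hy).2
      have h2 := (Finset.mem_filter.mp (Finset.mem_filter.mp hy).1).2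
      push_neg at h1 h2
      have h3 := hUhalf y (Finset.mem_filter.mp (Finset.mem_filter.mp hy).1).1
      have h4 := hdecay y h2 h3
      rw [abs_of_nonpos h1] at h4
      simpa [neg_neg] using h4
  calc ∑ fj ∈ T, κ ^ ℓ * ‖iteratedDeriv ℓ K (f - fj)‖ = ∑ y ∈ U, G y := hsumT
    _ = ∑ y ∈ N, G y + (∑ y ∈ P, G y + ∑ y ∈ M, G y) := hsplit
    _ ≤ 127 * C₁ + (C₂ * ∑' j : ℕ, 1 / ((j : ℝ) + 1) ^ 3 +
        C₂ * ∑' j : ℕ, 1 / ((j : ℝ) + 1) ^ 3) := by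
        exact add_le_add hNsum (add_le_add hPsum hMsum)
    _ = 127 * C₁ + 2 * C₂ * ∑' j : ℕ, 1 / ((j : ℝ) + 1) ^ 3 := by ring
end
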